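/- Let p_1, ..., p_T in (0,1] and suppose the detection score S_T = sum_{t=1}^T s_t where E[s_t] = H_{1/p_t} (the generalized harmonic number). Then E[S_T] >= T + (pi^2/6 - 1) * H_T, where H_T = -sum_{t=1}^T p_t ln(p_t). -/

import Mathlib

open MeasureTheory Real

/-- Shifted Basel problem: `∑ 1/(n+2)² = π²/6 - 1`. -/
lemma hasSum_shifted_basel :
    HasSum (fun n : ℕ => (1 : ℝ) / ((n : ℝ) + 2) ^ 2) (π ^ 2 / 6 - 1) := by
  have h : HasSum (fun n : ℕ => (1 : ℝ) / ((n + 2 : ℕ) : ℝ) ^ 2) (π ^ 2 / 6 - 1) := by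
    rw [hasSum_nat_add_iff (f := fun n : ℕ => (1 : ℝ) / (n : ℝ) ^ 2) 2]
    convert hasSum_zeta_two using 1
    · rfl
    · norm_num [Finset.sum_range_succ]
  convert h using 2 with n
  push_cast
  ring

/-- Telescoping sum: `∑ (1/(n+1) - 1/(n+2)) = 1`. -/
lemma hasSum_telescope :
    HasSum (fun n : ℕ => (1 : ℝ) / ((n : ℝ) + 1) - 1 / ((n : ℝ) + 2)) 1 := by
  have hnn : ∀ n : ℕ, (0 : ℝ) ≤ 1 / ((n : ℝ) + 1) - 1 / ((n : ℝ) + 2) := by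
    intro n
    have h1 : (0 : ℝ) < (n : ℝ) + 1 := by positivity
    have h2 : (0 : ℝ) < (n : ℝ) + 2 := by positivity
    rw [sub_nonneg]
    apply div_le_div_of_nonneg_left (by norm_num) h1 (by linarith)
  rw [hasSum_iff_tendsto_nat_of_nonneg hnn]
  have key : ∀ N : ℕ, ∑ n ∈ Finset.range N, ((1 : ℝ) / ((n : ℝ) + 1) - 1 / ((n : ℝ) + 2))
      = 1 - 1 / ((N : ℝ) + 1) := by
    intro N
    have h := Finset.sum_range_sub' (f := fun n : ℕ => (1 : ℝ) / ((n : ℝ) + 1)) N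
    have h2 : ∑ n ∈ Finset.range N, ((1 : ℝ) / ((n : ℝ) + 1) - 1 / ((n : ℝ) + 2))
        = ∑ i ∈ Finset.range N, ((fun n : ℕ => (1 : ℝ) / ((n : ℝ) + 1)) i
          - (fun n : ℕ => (1 : ℝ) / ((n : ℝ) + 1)) (i + 1)) := by
      apply Finset.sum_congr rfl
      intro i _
      push_cast
      ring
    rw [h2, h]
    norm_num
  simp only [key]
  have : Filter.Tendsto (fun N : ℕ => 1 - 1 / ((N : ℝ) + 1)) Filter.atTop (nhds (1 - 0)) :=
    Filter.Tendsto.const_sub 1 tendsto_one_div_add_atTop_nhds_zero_nat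
  simpa using this

/-- Single-token bound: for `x ≥ 1`,
`∑ (1/(n+1) - 1/(n+1+x)) ≥ 1 + (π²/6 - 1) log x / x`. -/
lemma harmonic_entropy_bound {x : ℝ} (hx : 1 ≤ x) :
    ∑' n : ℕ, (1 / ((n : ℝ) + 1) - 1 / (((n : ℝ) + 1) + x))
      ≥ 1 + (π ^ 2 / 6 - 1) * (Real.log x / x) := by
  have hx0 : (0 : ℝ) < x := lt_of_lt_of_le one_pos hx
  set b : ℕ → ℝ := fun n => 1 / ((n : ℝ) + 2) - 1 / (((n : ℝ) + 1) + x) with hb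
  -- lower bound on b n
  have hblow : ∀ n : ℕ, (x - 1) / x * (1 / ((n : ℝ) + 2) ^ 2) ≤ b n := by
    intro n
    have h2 : (0 : ℝ) < (n : ℝ) + 2 := by positivity
    have h3 : (0 : ℝ) < (n : ℝ) + 1 + x := by positivity
    have hbeq : b n = (x - 1) / (((n : ℝ) + 2) * ((n : ℝ) + 1 + x)) := by
      rw [hb]
      field_simp
      ring
    have hxn : ((n : ℝ) + 2) * ((n : ℝ) + 1 + x) ≤ x * ((n : ℝ) + 2) ^ 2 := by
      nlinarith [mul_le_mul_of_nonneg_left hx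
        (show (0 : ℝ) ≤ ((n : ℝ) + 2) * ((n : ℝ) + 1) by positivity)]
    calc (x - 1) / x * (1 / ((n : ℝ) + 2) ^ 2)
        = (x - 1) / (x * ((n : ℝ) + 2) ^ 2) := by
          rw [div_mul_div_comm, mul_one]
      _ ≤ (x - 1) / (((n : ℝ) + 2) * ((n : ℝ) + 1 + x)) :=
          div_le_div_of_nonneg_left (by linarith) (by positivity) hxn
      _ = b n := hbeq.symm
  -- upper bound for summability
  have hbup : ∀ n : ℕ, b n ≤ (x - 1) * (1 / ((n : ℝ) + 2) ^ 2) := by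
    intro n
    have h2 : (0 : ℝ) < (n : ℝ) + 2 := by positivity
    have h3 : (0 : ℝ) < (n : ℝ) + 1 + x := by positivity
    have hbeq : b n = (x - 1) / (((n : ℝ) + 2) * ((n : ℝ) + 1 + x)) := by
      rw [hb]; field_simp; ring
    have hxn : ((n : ℝ) + 2) ^ 2 ≤ ((n : ℝ) + 2) * ((n : ℝ) + 1 + x) := by nlinarith
    calc b n = (x - 1) / (((n : ℝ) + 2) * ((n : ℝ) + 1 + x)) := hbeq
      _ ≤ (x - 1) / ((n : ℝ) + 2) ^ 2 :=
          div_le_div_of_nonneg_left (by linarith) (by positivity) hxn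
      _ = (x - 1) * (1 / ((n : ℝ) + 2) ^ 2) := by
          rw [mul_one_div]
  have hbnonneg : ∀ n : ℕ, 0 ≤ b n := by
    intro n
    have hnum : 0 ≤ (x - 1) / x * (1 / ((n : ℝ) + 2) ^ 2) := by
      apply mul_nonneg (div_nonneg (by linarith) (le_of_lt hx0)) (by positivity)
    exact le_trans hnum (hblow n)
  have hsumub : Summable (fun n : ℕ => (x - 1) * (1 / ((n : ℝ) + 2) ^ 2)) :=
    (hasSum_shifted_basel.mul_left (x - 1)).summable
  have hbsummable : Summable b :=
    Summable.of_nonneg_of_le hbnonneg hbup hsumub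
  -- sum of lower bounds
  have hlowsum : HasSum (fun n : ℕ => (x - 1) / x * (1 / ((n : ℝ) + 2) ^ 2))
      ((x - 1) / x * (π ^ 2 / 6 - 1)) := hasSum_shifted_basel.mul_left _
  have htsumb : (x - 1) / x * (π ^ 2 / 6 - 1) ≤ ∑' n, b n := by
    rw [← hlowsum.tsum_eq]
    exact Summable.tsum_le_tsum hblow hlowsum.summable hbsummable
  -- decompose the main sum
  have hdecomp : ∀ n : ℕ,
      (1 / ((n : ℝ) + 1) - 1 / (((n : ℝ) + 1) + x))
        = (1 / ((n : ℝ) + 1) - 1 / ((n : ℝ) + 2)) + b n := by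
    intro n; rw [hb]; ring
  have hmain : HasSum (fun n : ℕ => 1 / ((n : ℝ) + 1) - 1 / (((n : ℝ) + 1) + x))
      (1 + ∑' n, b n) := by
    have := hasSum_telescope.add hbsummable.hasSum
    simpa only [← hdecomp] using this
  rw [hmain.tsum_eq]
  -- final estimate using log x ≤ x - 1
  have hlog : Real.log x ≤ x - 1 := Real.log_le_sub_one_of_pos hx0
  have hc : (0 : ℝ) ≤ π ^ 2 / 6 - 1 := by
    have : (3 : ℝ) < π := Real.pi_gt_three
    nlinarith
  have hfin : (π ^ 2 / 6 - 1) * (Real.log x / x) ≤ (π ^ 2 / 6 - 1) * ((x - 1) / x) :=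
    mul_le_mul_of_nonneg_left (by gcongr) hc
  have hcomm : (π ^ 2 / 6 - 1) * ((x - 1) / x) = (x - 1) / x * (π ^ 2 / 6 - 1) :=
    mul_comm _ _
  linarith

/-- Expected score under H₁: if each token score `s t` has expectation equal to the
generalized harmonic number `H_{1/p t}`, then
`E[S_T] ≥ T + (π²/6 - 1) H_T` with `H_T = -∑ t, p t log (p t)`. -/
theorem expected_score_entropy_bound
    {Ω : Type*} [MeasurableSpace Ω] (μ : Measure Ω) [IsProbabilityMeasure μ]
    (T : ℕ) (p : Fin T → ℝ) (hp : ∀ t, p t ∈ Set.Ioc (0 : ℝ) 1)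
    (s : Fin T → Ω → ℝ) (hint : ∀ t, Integrable (s t) μ)
    (hE : ∀ t, ∫ ω, s t ω ∂μ =
      ∑' n : ℕ, (1 / (n + 1 : ℝ) - 1 / ((n + 1 : ℝ) + 1 / p t))) :
    ∫ ω, (∑ t, s t ω) ∂μ ≥
      T + (π ^ 2 / 6 - 1) * (∑ t, -(p t * Real.log (p t))) := by
  have hsplit : ∫ ω, (∑ t, s t ω) ∂μ = ∑ t, ∫ ω, s t ω ∂μ :=
    integral_finset_sum _ (fun t _ => hint t)
  rw [hsplit]
  have hterm : ∀ t : Fin T,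
      1 + (π ^ 2 / 6 - 1) * (-(p t * Real.log (p t))) ≤ ∫ ω, s t ω ∂μ := by
    intro t
    obtain ⟨hpt0, hpt1⟩ := hp t
    have hx : (1 : ℝ) ≤ 1 / p t := by
      rw [le_div_iff₀ hpt0]
      linarith
    have hb := harmonic_entropy_bound hx
    rw [hE t]
    have hrw : Real.log (1 / p t) / (1 / p t) = -(p t * Real.log (p t)) := by
      rw [one_div, Real.log_inv, div_eq_mul_inv, inv_inv]
      ring
    rw [hrw] at hb
    exact hb
  calc ∑ t, ∫ ω, s t ω ∂μ
      ≥ ∑ t : Fin T, (1 + (π ^ 2 / 6 - 1) * (-(p t * Real.log (p t)))) :=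
        Finset.sum_le_sum (fun t _ => hterm t)
    _ = T + (π ^ 2 / 6 - 1) * (∑ t, -(p t * Real.log (p t))) := by
        rw [Finset.sum_add_distrib, Finset.sum_const, ← Finset.mul_sum]
        simp
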